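/- Suppose D_iᵀAD_i is invertible and rank D_i = p for all 0 ≤ i ≤ k in the cCG iteration. Then the three subspaces span[R_i]₀^k, span[D_i]₀^k, and span[AⁱR₀]₀^k of ℝⁿ coincide. -/

import Mathlib

open Matrix

/-- The span in `ℝⁿ` of all the columns of the matrices `M 0, …, M k`. -/
def colSpan (n p : ℕ) (k : ℕ) (M : ℕ → Matrix (Fin n) (Fin p) ℝ) :
    Submodule ℝ (Fin n → ℝ) :=
  Submodule.span ℝ {v : Fin n → ℝ | ∃ i ≤ k, ∃ j : Fin p, v = fun r => M i r j}

lemma mem_colSpan {n p k : ℕ} {M : ℕ → Matrix (Fin n) (Fin p) ℝ} {i : ℕ} (hi : i ≤ k)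
    (j : Fin p) : (fun r => M i r j) ∈ colSpan n p k M :=
  Submodule.subset_span ⟨i, hi, j, rfl⟩

lemma colSpan_le {n p k : ℕ} {M : ℕ → Matrix (Fin n) (Fin p) ℝ} {S : Submodule ℝ (Fin n → ℝ)}
    (h : ∀ i ≤ k, ∀ j : Fin p, (fun r => M i r j) ∈ S) : colSpan n p k M ≤ S := by
  rw [colSpan, Submodule.span_le]
  rintro v ⟨i, hi, j, rfl⟩
  exact h i hi j

lemma colSpan_mono {n p : ℕ} {m k : ℕ} (h : m ≤ k) (M : ℕ → Matrix (Fin n) (Fin p) ℝ) :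
    colSpan n p m M ≤ colSpan n p k M :=
  colSpan_le fun i hi j => mem_colSpan (hi.trans h) j

lemma col_mul_mem {n p q : ℕ} {N : Matrix (Fin n) (Fin p) ℝ} (C : Matrix (Fin p) (Fin q) ℝ)
    {S : Submodule ℝ (Fin n → ℝ)} (h : ∀ l, (fun r => N r l) ∈ S) (j : Fin q) :
    (fun r => (N * C) r j) ∈ S := by
  have : (fun r => (N * C) r j) = ∑ l : Fin p, C l j • (fun r => N r l) := by
    funext r
    simp [Matrix.mul_apply, Finset.sum_apply, mul_comm]
  rw [this]
  exact Submodule.sum_mem S fun l _ => Submodule.smul_mem S _ (h l)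

lemma col_mul_eq_mulVec {n p : ℕ} (A : Matrix (Fin n) (Fin n) ℝ) (M : Matrix (Fin n) (Fin p) ℝ)
    (j : Fin p) : (fun r => (A * M) r j) = A.mulVec (fun r => M r j) := by
  funext r; simp [Matrix.mul_apply, Matrix.mulVec, dotProduct]

lemma mulVec_mem_of_span {n : ℕ} (A : Matrix (Fin n) (Fin n) ℝ) {s : Set (Fin n → ℝ)}
    {S : Submodule ℝ (Fin n → ℝ)} (hs : ∀ x ∈ s, A.mulVec x ∈ S) {v : Fin n → ℝ}
    (hv : v ∈ Submodule.span ℝ s) : A.mulVec v ∈ S := by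
  induction hv using Submodule.span_induction with
  | mem x hx => exact hs x hx
  | zero => simpa [Matrix.mulVec_zero] using S.zero_mem
  | add x y _ _ hx hy => rw [Matrix.mulVec_add]; exact S.add_mem hx hy
  | smul a x _ hx => rw [Matrix.mulVec_smul]; exact S.smul_mem a hx

lemma inj_of_rank {n p : ℕ} {D : Matrix (Fin n) (Fin p) ℝ} (h : D.rank = p) :
    Function.Injective D.mulVec := by
  have h1 := LinearMap.finrank_range_add_finrank_ker D.mulVecLin
  rw [Matrix.rank] at h
  rw [h, Module.finrank_pi] at h1
  simp at h1
  have := LinearMap.ker_eq_bot.mp h1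
  exact this

lemma injective_of_mulVec_eq_zero {n p : ℕ} {M : Matrix (Fin n) (Fin p) ℝ}
    (h : ∀ c, M.mulVec c = 0 → c = 0) : Function.Injective M.mulVec := by
  intro c1 c2 hc
  have : M.mulVec (c1 - c2) = 0 := by
    have := M.mulVecLin.map_sub c1 c2
    simp only [Matrix.mulVecLin_apply] at this
    rw [this, hc, sub_self]
  exact sub_eq_zero.mp (h _ this)

lemma isUnit_transpose_mul_self {n p : ℕ} {R : Matrix (Fin n) (Fin p) ℝ}
    (h : Function.Injective R.mulVec) : IsUnit (Rᵀ * R).det := by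
  apply (Matrix.isUnit_iff_isUnit_det _).mp
  apply Matrix.mulVec_injective_iff_isUnit.mp
  apply injective_of_mulVec_eq_zero
  intro c hc
  have h2 : R.mulVec c ⬝ᵥ R.mulVec c = 0 := by
    have hz : c ⬝ᵥ (Rᵀ * R).mulVec c = 0 := by rw [hc]; simp
    rwa [← Matrix.mulVec_mulVec, Matrix.dotProduct_mulVec, Matrix.vecMul_transpose] at hz
  have h3 : R.mulVec c = 0 := by rwa [dotProduct_self_eq_zero] at h2
  have : R.mulVec c = R.mulVec 0 := by simpa using h3
  simpa using h this

/-- If `D_iᵀAD_i` is invertible and `rank D_i = p` for all `0 ≤ i ≤ k`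
in the cCG iteration, then the three subspaces `span[R_i]₀^k`, `span[D_i]₀^k` and
`span[AⁱR₀]₀^k` of `ℝⁿ` coincide. -/
theorem cCG_spans_coincide
    (n p : ℕ) (hn : 0 < n) (hp : 0 < p) (hpn : p ≤ n)
    (A : Matrix (Fin n) (Fin n) ℝ) (hA : A.PosDef)
    (b : Fin n → ℝ) (k : ℕ)
    (X R D : ℕ → Matrix (Fin n) (Fin p) ℝ)
    (α β : ℕ → Matrix (Fin p) (Fin p) ℝ)
    (hR : ∀ i, R i = A * X i - Matrix.vecMulVec b 1)
    (hD0 : D 0 = R 0)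
    (hinv : ∀ i ≤ k, IsUnit ((D i)ᵀ * A * D i).det)
    (hrank : ∀ i ≤ k, (D i).rank = p)
    (hα : ∀ i ≤ k, α i = -((R i)ᵀ * D i * ((D i)ᵀ * A * D i)⁻¹))
    (hX : ∀ i ≤ k, X (i + 1) = X i + D i * (α i)ᵀ)
    (hβ : ∀ i ≤ k, β i = -((R (i + 1))ᵀ * A * D i * ((D i)ᵀ * A * D i)⁻¹))
    (hDs : ∀ i ≤ k, D (i + 1) = R (i + 1) + D i * (β i)ᵀ)
    :
    colSpan n p k R = colSpan n p k D ∧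
      colSpan n p k D = colSpan n p k (fun i => A ^ i * R 0) := by
  have hAT : Aᵀ = A := by
    have h := hA.isHermitian
    simpa [Matrix.IsHermitian, Matrix.conjTranspose_eq_transpose_of_trivial] using h
  have hGT : ∀ i : ℕ, ((D i)ᵀ * A * D i)ᵀ = (D i)ᵀ * A * D i := by
    intro i
    rw [Matrix.transpose_mul, Matrix.transpose_mul, Matrix.transpose_transpose, hAT,
      Matrix.mul_assoc]
  have hαT : ∀ i ≤ k, (α i)ᵀ = -(((D i)ᵀ * A * D i)⁻¹ * ((D i)ᵀ * R i)) := by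
    intro i hi
    rw [hα i hi, Matrix.transpose_neg, Matrix.transpose_mul, Matrix.transpose_nonsing_inv,
      hGT i, Matrix.transpose_mul, Matrix.transpose_transpose]
  have hβT : ∀ i ≤ k, (β i)ᵀ = -(((D i)ᵀ * A * D i)⁻¹ * ((D i)ᵀ * (A * R (i + 1)))) := by
    intro i hi
    rw [hβ i hi, Matrix.transpose_neg, Matrix.transpose_mul, Matrix.transpose_nonsing_inv,
      hGT i, Matrix.transpose_mul, Matrix.transpose_mul, Matrix.transpose_transpose, hAT,
      Matrix.mul_assoc]
  have hRrec : ∀ i ≤ k, R (i + 1) = R i + A * D i * (α i)ᵀ := by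
    intro i hi
    rw [hR (i + 1), hX i hi, hR i, Matrix.mul_add, ← Matrix.mul_assoc]
    abel
  have hDR0 : ∀ i ≤ k, (D i)ᵀ * R (i + 1) = 0 := by
    intro i hi
    rw [hRrec i hi, hαT i hi, Matrix.mul_add]
    simp only [Matrix.mul_neg, ← Matrix.mul_assoc]
    rw [Matrix.mul_nonsing_inv _ (hinv i hi)]
    simp
  have hDAD0 : ∀ i ≤ k, (D i)ᵀ * A * D (i + 1) = 0 := by
    intro i hi
    rw [hDs i hi, hβT i hi]
    simp only [Matrix.mul_add, Matrix.mul_neg, ← Matrix.mul_assoc]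
    rw [Matrix.mul_nonsing_inv _ (hinv i hi)]
    simp
  have hDinj : ∀ i ≤ k, Function.Injective (D i).mulVec := fun i hi => inj_of_rank (hrank i hi)
  have hGinj : ∀ i ≤ k, Function.Injective ((D i)ᵀ * A * D i).mulVec := fun i hi =>
    Matrix.mulVec_injective_iff_isUnit.mpr ((Matrix.isUnit_iff_isUnit_det _).mpr (hinv i hi))
  have hRker : ∀ i ≤ k, ∀ c, (R i).mulVec c = 0 → c = 0 := by
    intro i hi c hc
    cases i with
    | zero =>
      have : (D 0).mulVec c = (D 0).mulVec 0 := by rw [hD0]; simpa using hc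
      simpa using hDinj 0 (Nat.zero_le k) this
    | succ j =>
      have hjk : j ≤ k := Nat.le_of_succ_le hi
      have h1 : (D (j + 1)).mulVec c = (D j).mulVec ((β j)ᵀ.mulVec c) := by
        rw [hDs j hjk, Matrix.add_mulVec, hc, Matrix.mulVec_mulVec]
        simp
      have h2 : ((D j)ᵀ * A * D j).mulVec ((β j)ᵀ.mulVec c) = 0 := by
        simp only [← Matrix.mulVec_mulVec]
        rw [← h1]
        simp only [Matrix.mulVec_mulVec, ← Matrix.mul_assoc]
        rw [hDAD0 j hjk]
        simp
      have h3 : (β j)ᵀ.mulVec c = 0 := by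
        have h4 : ((D j)ᵀ * A * D j).mulVec ((β j)ᵀ.mulVec c) =
            ((D j)ᵀ * A * D j).mulVec 0 := by simpa using h2
        simpa using hGinj j hjk h4
      have h5 : (D (j + 1)).mulVec c = (D (j + 1)).mulVec 0 := by
        rw [h1, h3]; simp
      simpa using hDinj (j + 1) hi h5
  have hRinj : ∀ i ≤ k, Function.Injective (R i).mulVec := fun i hi =>
    injective_of_mulVec_eq_zero (hRker i hi)
  have hRTD : ∀ i ≤ k, (R i)ᵀ * D i = (R i)ᵀ * R i := by
    intro i hi
    cases i with
    | zero => rw [hD0]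
    | succ j =>
      have hjk : j ≤ k := Nat.le_of_succ_le hi
      rw [hDs j hjk, Matrix.mul_add]
      have h0 : (R (j + 1))ᵀ * D j = 0 := by
        have h := hDR0 j hjk
        calc (R (j + 1))ᵀ * D j = ((D j)ᵀ * R (j + 1))ᵀ := by
              rw [Matrix.transpose_mul, Matrix.transpose_transpose]
          _ = 0 := by rw [h]; simp
      rw [← Matrix.mul_assoc, h0, Matrix.zero_mul, add_zero]
  have hαdet : ∀ i ≤ k, IsUnit (α i).det := by
    intro i hi
    rw [hα i hi, hRTD i hi, Matrix.det_neg, Matrix.det_mul]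
    exact (isUnit_one.neg.pow (Fintype.card (Fin p))).mul
      ((isUnit_transpose_mul_self (hRinj i hi)).mul
        (Matrix.isUnit_nonsing_inv_det _ (hinv i hi)))
  have hAD : ∀ i ≤ k, A * D i = (R (i + 1) - R i) * ((α i)ᵀ)⁻¹ := by
    intro i hi
    have hdet : IsUnit ((α i)ᵀ).det := by rw [Matrix.det_transpose]; exact hαdet i hi
    rw [hRrec i hi, add_sub_cancel_left, Matrix.mul_nonsing_inv_cancel_right _ _ hdet]
  -- Step A : span of R's = span of D's at every level
  have stepA : ∀ m, m ≤ k → colSpan n p m R = colSpan n p m D := by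
    intro m
    induction m with
    | zero =>
      intro _
      apply le_antisymm
      · apply colSpan_le
        intro i hi j
        have hi0 : i = 0 := Nat.le_zero.mp hi
        subst hi0
        rw [← hD0]
        exact mem_colSpan le_rfl j
      · apply colSpan_le
        intro i hi j
        have hi0 : i = 0 := Nat.le_zero.mp hi
        subst hi0
        rw [hD0]
        exact mem_colSpan le_rfl j
    | succ m ih =>
      intro hm1
      have hmk : m ≤ k := Nat.le_of_succ_le hm1
      have ihm := ih hmk
      apply le_antisymm
      · apply colSpan_le
        intro i hi j
        rcases Nat.lt_or_ge i (m + 1) with h | h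
        · have hmem : (fun r => R i r j) ∈ colSpan n p m D := by
            rw [← ihm]; exact mem_colSpan (Nat.lt_succ_iff.mp h) j
          exact colSpan_mono (Nat.le_succ m) D hmem
        · have hie : i = m + 1 := le_antisymm hi h
          subst hie
          have hRe : R (m + 1) = D (m + 1) - D m * (β m)ᵀ := by
            rw [hDs m hmk]; abel
          rw [hRe]
          have h1 : (fun r => (D (m + 1) - D m * (β m)ᵀ) r j) =
              (fun r => D (m + 1) r j) - (fun r => (D m * (β m)ᵀ) r j) := rfl
          rw [h1]
          exact sub_mem (mem_colSpan le_rfl j)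
            (col_mul_mem _ (fun l => mem_colSpan (Nat.le_succ m) l) j)
      · apply colSpan_le
        intro i hi j
        rcases Nat.lt_or_ge i (m + 1) with h | h
        · have hmem : (fun r => D i r j) ∈ colSpan n p m R := by
            rw [ihm]; exact mem_colSpan (Nat.lt_succ_iff.mp h) j
          exact colSpan_mono (Nat.le_succ m) R hmem
        · have hie : i = m + 1 := le_antisymm hi h
          subst hie
          rw [hDs m hmk]
          have h1 : (fun r => (R (m + 1) + D m * (β m)ᵀ) r j) =
              (fun r => R (m + 1) r j) + (fun r => (D m * (β m)ᵀ) r j) := rfl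
          rw [h1]
          refine add_mem (mem_colSpan le_rfl j) (col_mul_mem _ (fun l => ?_) j)
          have hmem : (fun r => D m r l) ∈ colSpan n p m R := by
            rw [ihm]; exact mem_colSpan le_rfl l
          exact colSpan_mono (Nat.le_succ m) R hmem
  -- Step B : columns of R m and D m lie in the Krylov space of level m
  have claimB : ∀ m, m ≤ k →
      (∀ j, (fun r => R m r j) ∈ colSpan n p m (fun i => A ^ i * R 0)) ∧
      (∀ j, (fun r => D m r j) ∈ colSpan n p m (fun i => A ^ i * R 0)) := by
    intro m
    induction m with
    | zero =>
      intro _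
      have e0 : (A ^ 0 * R 0 : Matrix (Fin n) (Fin p) ℝ) = R 0 := by
        rw [pow_zero, Matrix.one_mul]
      constructor
      · intro j
        have e : (fun r => R 0 r j) =
            (fun r => ((A ^ 0 * R 0 : Matrix (Fin n) (Fin p) ℝ)) r j) := by rw [e0]
        rw [e]
        exact mem_colSpan (M := fun i => A ^ i * R 0) le_rfl j
      · intro j
        have e : (fun r => D 0 r j) =
            (fun r => ((A ^ 0 * R 0 : Matrix (Fin n) (Fin p) ℝ)) r j) := by rw [hD0, e0]
        rw [e]
        exact mem_colSpan (M := fun i => A ^ i * R 0) le_rfl j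
    | succ m ih =>
      intro hm1
      have hmk : m ≤ k := Nat.le_of_succ_le hm1
      obtain ⟨ihR, ihD⟩ := ih hmk
      have hADm : ∀ j, (fun r => (A * D m) r j) ∈
          colSpan n p (m + 1) (fun i => A ^ i * R 0) := by
        intro j
        rw [col_mul_eq_mulVec]
        refine mulVec_mem_of_span A ?_ (ihD j)
        rintro x ⟨i, hi, j', rfl⟩
        have e : A.mulVec (fun r => (A ^ i * R 0) r j') =
            (fun r => (A ^ (i + 1) * R 0) r j') := by
          rw [← col_mul_eq_mulVec, ← Matrix.mul_assoc, ← pow_succ']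
        rw [e]
        exact mem_colSpan (M := fun i => A ^ i * R 0) (Nat.succ_le_succ hi) j'
      have hRm1 : ∀ j, (fun r => R (m + 1) r j) ∈
          colSpan n p (m + 1) (fun i => A ^ i * R 0) := by
        intro j
        rw [hRrec m hmk]
        have h1 : (fun r => (R m + A * D m * (α m)ᵀ) r j) =
            (fun r => R m r j) + (fun r => ((A * D m) * (α m)ᵀ) r j) := rfl
        rw [h1]
        exact add_mem (colSpan_mono (Nat.le_succ m) _ (ihR j)) (col_mul_mem _ hADm j)
      refine ⟨hRm1, fun j => ?_⟩
      rw [hDs m hmk]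
      have h1 : (fun r => (R (m + 1) + D m * (β m)ᵀ) r j) =
          (fun r => R (m + 1) r j) + (fun r => (D m * (β m)ᵀ) r j) := rfl
      rw [h1]
      exact add_mem (hRm1 j)
        (col_mul_mem _ (fun l => colSpan_mono (Nat.le_succ m) _ (ihD l)) j)
  -- Step C : columns of A^m * R 0 lie in the span of the D's of level m
  have stepC : ∀ m, m ≤ k → ∀ j, (fun r => (A ^ m * R 0) r j) ∈ colSpan n p m D := by
    intro m
    induction m with
    | zero =>
      intro _ j
      have e0 : (A ^ 0 * R 0 : Matrix (Fin n) (Fin p) ℝ) = D 0 := by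
        rw [hD0, pow_zero, Matrix.one_mul]
      have e : (fun r => ((A ^ 0 * R 0 : Matrix (Fin n) (Fin p) ℝ)) r j) =
          (fun r => D 0 r j) := by rw [e0]
      rw [e]
      exact mem_colSpan le_rfl j
    | succ m ih =>
      intro hm1 j
      have hmk : m ≤ k := Nat.le_of_succ_le hm1
      have estep : (fun r => (A ^ (m + 1) * R 0) r j) =
          A.mulVec (fun r => (A ^ m * R 0) r j) := by
        rw [← col_mul_eq_mulVec, ← Matrix.mul_assoc, ← pow_succ']
      rw [estep]
      refine mulVec_mem_of_span A ?_ (ih hmk j)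
      rintro x ⟨i, hi, j', rfl⟩
      rw [← col_mul_eq_mulVec, hAD i (hi.trans hmk)]
      refine col_mul_mem _ (fun l => ?_) j'
      have h1 : (fun r => (R (i + 1) - R i) r l) =
          (fun r => R (i + 1) r l) - (fun r => R i r l) := rfl
      rw [h1, ← stepA (m + 1) hm1]
      exact sub_mem (mem_colSpan (Nat.succ_le_succ hi) l)
        (mem_colSpan (hi.trans (Nat.le_succ m)) l)
  refine ⟨stepA k le_rfl, le_antisymm ?_ ?_⟩
  · apply colSpan_le
    intro i hi j
    exact colSpan_mono hi _ ((claimB i hi).2 j)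
  · apply colSpan_le
    intro i hi j
    exact colSpan_mono hi D (stepC i hi j)
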